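/- Let p be a prime number, r ≥ 1 an integer, and R a commutative ring in which the image of p is invertible. Then the natural R-algebra homomorphism R[X]/(X^{p^r} − 1) → R[X]/(X^{p^{r−1}} − 1) × R[X]/(Φ_{p^r}), whose components are induced by the divisibilities (X^{p^{r−1}} − 1) ∣ (X^{p^r} − 1) and Φ_{p^r} ∣ (X^{p^r} − 1) in R[X], is bijective. -/

import Mathlib

set_option synthInstance.maxHeartbeats 400000


open Polynomial

/-- If `p` is a prime invertible in `R` and `r ≥ 1`, the natural map
`R[X]/(X^{p^r} − 1) → R[X]/(X^{p^{r−1}} − 1) × R[X]/(Φ_{p^r})` is bijective. -/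
theorem cyclotomic_splitting_prime_power
    {R : Type*} [CommRing R] (p : ℕ) (hp : p.Prime) (r : ℕ) (hr : 1 ≤ r)
    (hu : IsUnit (p : R)) :
    Function.Bijective
      (RingHom.prod
        (Ideal.Quotient.factor
          (S := Ideal.span {(X : R[X]) ^ p ^ r - 1})
          (T := Ideal.span {(X : R[X]) ^ p ^ (r - 1) - 1})
          (Ideal.span_singleton_le_span_singleton.mpr (by
            obtain ⟨c, hc⟩ : p ^ (r - 1) ∣ p ^ r := pow_dvd_pow p (Nat.sub_le r 1)
            rw [hc, pow_mul]
            simpa using sub_dvd_pow_sub_pow ((X : R[X]) ^ p ^ (r - 1)) 1 c)))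
        (Ideal.Quotient.factor
          (S := Ideal.span {(X : R[X]) ^ p ^ r - 1})
          (T := Ideal.span {Polynomial.cyclotomic (p ^ r) R})
          (Ideal.span_singleton_le_span_singleton.mpr
            (Polynomial.cyclotomic.dvd_X_pow_sub_one (p ^ r) R)))) := by
  haveI : Fact p.Prime := ⟨hp⟩
  obtain ⟨r, rfl⟩ : ∃ s, r = s + 1 := ⟨r - 1, (Nat.succ_pred_eq_of_pos hr).symm⟩
  set Φ : R[X] := Polynomial.cyclotomic (p ^ (r + 1)) R with hΦ
  set Y : R[X] := X ^ p ^ r with hY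
  -- the product decomposition
  have hmul : (Y - 1) * Φ = X ^ p ^ (r + 1) - 1 := by
    rw [mul_comm]; exact cyclotomic_prime_pow_mul_X_pow_sub_one R p r
  -- Φ ≡ p mod (Y - 1)
  have hdvd : (Y - 1) ∣ (Φ - C (p : R)) := by
    rw [hΦ, cyclotomic_prime_pow_eq_geom_sum hp]
    have : (C (p : R) : R[X]) = ∑ _i ∈ Finset.range p, 1 := by
      simp [Polynomial.C_eq_natCast]
    rw [this, ← Finset.sum_sub_distrib]
    refine Finset.dvd_sum fun i _ => ?_
    simpa using sub_dvd_pow_sub_pow Y 1 i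
  obtain ⟨g, hg⟩ := hdvd
  have hg' : Φ = C (p : R) + (Y - 1) * g := by linear_combination hg
  obtain ⟨v, hv⟩ : ∃ v : R, v * (p : R) = 1 := by
    obtain ⟨u, hu'⟩ := hu
    exact ⟨(u⁻¹ : Rˣ), by rw [← hu']; simp⟩
  have hcop : IsCoprime (Y - 1) Φ := by
    refine ⟨-(C v * g), C v, ?_⟩
    have h1 : (C v : R[X]) * C (p : R) = 1 := by rw [← C_mul, hv, C_1]
    rw [hg']
    linear_combination h1
  set I : Ideal R[X] := Ideal.span {Y - 1}
  set J : Ideal R[X] := Ideal.span {Φ}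
  have hsup : I ⊔ J = ⊤ := Ideal.isCoprime_iff_sup_eq.mp
    ((Ideal.isCoprime_span_singleton_iff _ _).mpr hcop)
  have hK : Ideal.span {(X : R[X]) ^ p ^ (r + 1) - 1} = I ⊓ J := by
    rw [← hmul, ← Ideal.span_singleton_mul_span_singleton,
      Ideal.mul_eq_inf_of_coprime hsup]
  constructor
  · rw [injective_iff_map_eq_zero]
    intro a ha
    obtain ⟨x, rfl⟩ := Ideal.Quotient.mk_surjective a
    rw [RingHom.prod_apply, Prod.mk_eq_zero, Ideal.Quotient.factor_mk,
      Ideal.Quotient.factor_mk, Ideal.Quotient.eq_zero_iff_mem,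
      Ideal.Quotient.eq_zero_iff_mem] at ha
    rw [Ideal.Quotient.eq_zero_iff_mem, hK]
    exact ⟨ha.1, ha.2⟩
  · rintro ⟨a, b⟩
    obtain ⟨y, rfl⟩ := Ideal.Quotient.mk_surjective a
    obtain ⟨z, rfl⟩ := Ideal.Quotient.mk_surjective b
    have h1 : (1 : R[X]) ∈ I ⊔ J := by rw [hsup]; trivial
    obtain ⟨i, hi, j, hj, hij⟩ := Submodule.mem_sup.mp h1
    refine ⟨Ideal.Quotient.mk _ (z * i + y * j), ?_⟩
    rw [RingHom.prod_apply, Ideal.Quotient.factor_mk, Ideal.Quotient.factor_mk, Prod.mk.injEq]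
    have hjy : j = 1 - i := by linear_combination hij
    have hiz : i = 1 - j := by linear_combination hij
    constructor
    · rw [Ideal.Quotient.mk_eq_mk_iff_sub_mem]
      have : z * i + y * j - y = (z - y) * i := by rw [hjy]; ring
      rw [this]
      exact I.mul_mem_left _ hi
    · rw [Ideal.Quotient.mk_eq_mk_iff_sub_mem]
      have : z * i + y * j - z = (y - z) * j := by rw [hiz]; ring
      rw [this]
      exact J.mul_mem_left _ hj
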